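/- Let α ∈ (0,1), λ > 0 and G_λ(r) = λ^α K_α(λ r). Then the radial function x ↦ G_λ(|x|) on ℝ² \ {0} satisfies the distributional equation ((-i∇ + A_α)² + λ²) G_λ = 0 on ℝ² \ {0}, where A_α(x) = α x^⊥/|x|² with x^⊥ = (-y, x). -/

import Mathlib

open MeasureTheory Real Set Filter Metric
open scoped Topology


noncomputable def Kn (α : ℝ) (n : ℕ) (x : ℝ) : ℝ :=
  ∫ t in Set.Ioi (0 : ℝ), Real.exp (-x * Real.cosh t) * Real.cosh t ^ n * Real.cosh (α * t)

lemma pow_le_exp_aux (m : ℕ) {u : ℝ} (hu : 0 ≤ u) :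
    u ^ m ≤ (m : ℝ) ^ m * Real.exp u := by
  rcases Nat.eq_zero_or_pos m with rfl | hm
  · simpa using Real.one_le_exp hu
  · have hm' : (0:ℝ) < m := by exact_mod_cast hm
    have h1 : u / m ≤ Real.exp (u / m) := le_trans (by linarith [div_nonneg hu hm'.le]) (Real.add_one_le_exp (u/m))
    have h2 : u ≤ m * Real.exp (u / m) := by
      have := mul_le_mul_of_nonneg_left h1 hm'.le
      rwa [mul_div_cancel₀] at this
      exact hm'.ne'
    calc u ^ m ≤ (m * Real.exp (u/m)) ^ m := pow_le_pow_left₀ hu h2 m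
      _ = (m:ℝ)^m * Real.exp (u/m) ^ m := mul_pow _ _ _
      _ = (m:ℝ)^m * Real.exp u := by
          rw [← Real.exp_nat_mul, mul_div_cancel₀]
          exact hm'.ne'

lemma t_le_cosh {t : ℝ} (ht : 0 ≤ t) : t ≤ Real.cosh t :=
  le_trans (Real.self_le_sinh_iff.mpr ht) (by
    nlinarith [Real.cosh_eq t, Real.sinh_eq t, Real.exp_pos (-t)])

lemma cosh_mul_le {α t : ℝ} (hα0 : 0 ≤ α) (hα1 : α ≤ 1) (ht : 0 ≤ t) :
    Real.cosh (α * t) ≤ Real.cosh t := by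
  rw [Real.cosh_le_cosh]
  rw [abs_of_nonneg (mul_nonneg hα0 ht), abs_of_nonneg ht]
  nlinarith

lemma integrable_aux (α : ℝ) (hα0 : 0 ≤ α) (hα1 : α ≤ 1) (n : ℕ) {x : ℝ} (hx : 0 < x) :
    IntegrableOn (fun t => Real.exp (-x * Real.cosh t) * Real.cosh t ^ n * Real.cosh (α * t))
      (Set.Ioi (0:ℝ)) := by
  set m := n + 1
  set C : ℝ := (m:ℝ)^m * (2/x)^m with hC
  apply Integrable.mono' ((exp_neg_integrableOn_Ioi 0 (show (0:ℝ) < x/2 by positivity)).const_mul C)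
  · exact (Continuous.aestronglyMeasurable (by continuity)).restrict
  · filter_upwards [ae_restrict_mem measurableSet_Ioi] with t ht
    have ht0 : (0:ℝ) ≤ t := le_of_lt ht
    have hc1 : (1:ℝ) ≤ Real.cosh t := Real.one_le_cosh t
    have hc0 : (0:ℝ) < Real.cosh t := by linarith
    have hca : (0:ℝ) < Real.cosh (α * t) := Real.cosh_pos _
    have hae : Real.cosh (α*t) ≤ Real.cosh t := cosh_mul_le hα0 hα1 ht0
    have hpow : Real.cosh t ^ m ≤ C * Real.exp (x/2 * Real.cosh t) := by
      have h := pow_le_exp_aux m (u := x/2 * Real.cosh t) (by positivity)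
      rw [mul_pow] at h
      have hxne : x ≠ 0 := hx.ne'
      calc Real.cosh t ^ m = ((x/2)^m * Real.cosh t ^ m) * (2/x)^m := by
            rw [mul_comm ((x/2)^m) _, mul_assoc, ← mul_pow]
            field_simp
            exact (one_pow m).symm
        _ ≤ ((m:ℝ)^m * Real.exp (x/2 * Real.cosh t)) * (2/x)^m :=
            mul_le_mul_of_nonneg_right h (by positivity)
        _ = C * Real.exp (x/2 * Real.cosh t) := by rw [hC]; ring
    have key : Real.exp (-x * Real.cosh t) * Real.cosh t ^ n * Real.cosh (α * t)
        ≤ C * Real.exp (-(x/2) * t) := by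
      have step1 : Real.exp (-x * Real.cosh t) * Real.cosh t ^ n * Real.cosh (α * t)
          ≤ Real.exp (-x * Real.cosh t) * Real.cosh t ^ m := by
        have : Real.cosh t ^ n * Real.cosh (α*t) ≤ Real.cosh t ^ n * Real.cosh t :=
          mul_le_mul_of_nonneg_left hae (by positivity)
        calc Real.exp (-x * Real.cosh t) * Real.cosh t ^ n * Real.cosh (α * t)
            = Real.exp (-x * Real.cosh t) * (Real.cosh t ^ n * Real.cosh (α*t)) := by ring
          _ ≤ Real.exp (-x * Real.cosh t) * (Real.cosh t ^ n * Real.cosh t) := by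
              exact mul_le_mul_of_nonneg_left this (Real.exp_pos _).le
          _ = Real.exp (-x * Real.cosh t) * Real.cosh t ^ m := by rw [pow_succ]
      have step2 : Real.exp (-x * Real.cosh t) * Real.cosh t ^ m
          ≤ C * Real.exp (-(x/2) * Real.cosh t) := by
        calc Real.exp (-x * Real.cosh t) * Real.cosh t ^ m
            ≤ Real.exp (-x * Real.cosh t) * (C * Real.exp (x/2 * Real.cosh t)) :=
              mul_le_mul_of_nonneg_left hpow (Real.exp_pos _).le
          _ = C * (Real.exp (-x * Real.cosh t) * Real.exp (x/2 * Real.cosh t)) := by ring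
          _ = C * Real.exp (-(x/2) * Real.cosh t) := by rw [← Real.exp_add]; ring_nf
      have step3 : Real.exp (-(x/2) * Real.cosh t) ≤ Real.exp (-(x/2) * t) := by
        apply Real.exp_le_exp.mpr
        have := t_le_cosh ht0
        nlinarith
      have hC0 : 0 ≤ C := by positivity
      calc Real.exp (-x * Real.cosh t) * Real.cosh t ^ n * Real.cosh (α * t)
          ≤ C * Real.exp (-(x/2) * Real.cosh t) := step1.trans step2
        _ ≤ C * Real.exp (-(x/2) * t) := mul_le_mul_of_nonneg_left step3 hC0
    have hpos : 0 ≤ Real.exp (-x * Real.cosh t) * Real.cosh t ^ n * Real.cosh (α * t) := by positivity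
    rw [Real.norm_eq_abs, abs_of_nonneg hpos]
    exact key

lemma hasDerivAt_Kn (α : ℝ) (hα0 : 0 ≤ α) (hα1 : α ≤ 1) (n : ℕ) {x : ℝ} (hx : 0 < x) :
    HasDerivAt (Kn α n) (-(Kn α (n+1) x)) x := by
  have key := hasDerivAt_integral_of_dominated_loc_of_deriv_le
    (μ := volume.restrict (Set.Ioi (0:ℝ))) (𝕜 := ℝ)
    (F := fun y t => Real.exp (-y * Real.cosh t) * Real.cosh t ^ n * Real.cosh (α * t))
    (F' := fun y t => -(Real.exp (-y * Real.cosh t) * Real.cosh t ^ (n+1) * Real.cosh (α * t)))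
    (x₀ := x) (s := ball x (x/2))
    (bound := fun t => Real.exp (-(x/2) * Real.cosh t) * Real.cosh t ^ (n+1) * Real.cosh (α * t))
    (ball_mem_nhds x (by positivity))
    (Eventually.of_forall fun y => (Continuous.aestronglyMeasurable (by continuity)).restrict)
    (integrable_aux α hα0 hα1 n hx)
    ((Continuous.aestronglyMeasurable (by continuity)).restrict)
    ?_ (integrable_aux α hα0 hα1 (n+1) (by positivity)) ?_
  · have h2 := key.2
    have : Kn α n = fun y => ∫ t in Set.Ioi (0:ℝ),
        Real.exp (-y * Real.cosh t) * Real.cosh t ^ n * Real.cosh (α * t) := rfl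
    rw [this]
    refine h2.congr_deriv (Eq.symm ?_)
    rw [show -(Kn α (n+1) x) = -(∫ t in Set.Ioi (0:ℝ),
        Real.exp (-x * Real.cosh t) * Real.cosh t ^ (n+1) * Real.cosh (α * t)) from rfl,
      ← integral_neg]
  · apply Eventually.of_forall
    intro t y hy
    have hyx : x/2 < y := by
      have := abs_lt.mp (mem_ball_iff_norm.mp hy)
      linarith [this.1]
    have hpos : (0:ℝ) ≤ Real.exp (-y * Real.cosh t) * Real.cosh t ^ (n+1) * Real.cosh (α * t) := by
      positivity
    rw [norm_neg, Real.norm_eq_abs, abs_of_nonneg hpos]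
    have : Real.exp (-y * Real.cosh t) ≤ Real.exp (-(x/2) * Real.cosh t) := by
      apply Real.exp_le_exp.mpr
      have := Real.one_le_cosh t
      nlinarith
    have h1 : (0:ℝ) ≤ Real.cosh t ^ (n+1) * Real.cosh (α*t) := by positivity
    calc Real.exp (-y * Real.cosh t) * Real.cosh t ^ (n+1) * Real.cosh (α * t)
        = Real.exp (-y * Real.cosh t) * (Real.cosh t ^ (n+1) * Real.cosh (α * t)) := by ring
      _ ≤ Real.exp (-(x/2) * Real.cosh t) * (Real.cosh t ^ (n+1) * Real.cosh (α * t)) :=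
          mul_le_mul_of_nonneg_right this h1
      _ = Real.exp (-(x/2) * Real.cosh t) * Real.cosh t ^ (n+1) * Real.cosh (α * t) := by ring
  · apply Eventually.of_forall
    intro t y _
    have h1 : HasDerivAt (fun y : ℝ => -y * Real.cosh t) (-Real.cosh t) y := by
      simpa [neg_mul, Pi.neg_def] using ((hasDerivAt_id y).mul_const (Real.cosh t)).neg
    have h2 := (h1.exp).mul_const (Real.cosh t ^ n * Real.cosh (α * t))
    convert h2 using 1
    · rfl
    · funext z; ring
    · simp only [pow_succ]; ring

lemma bessel_ode (α : ℝ) (hα0 : 0 ≤ α) (hα1 : α ≤ 1) {x : ℝ} (hx : 0 < x) :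
    x^2 * Kn α 2 x - x * Kn α 1 x - (x^2 + α^2) * Kn α 0 x = 0 := by
  set W : ℝ → ℝ := fun t => Real.exp (-x * Real.cosh t) *
    (-(x * Real.sinh t * Real.cosh (α*t)) - α * Real.sinh (α*t)) with hWdef
  set W' : ℝ → ℝ := fun t => Real.exp (-x * Real.cosh t) *
    ((x^2 * Real.cosh t^2 - x * Real.cosh t - x^2 - α^2) * Real.cosh (α*t)) with hW'def
  have hW : ∀ t, HasDerivAt W (W' t) t := by
    intro t
    have hc : HasDerivAt (fun t : ℝ => -x * Real.cosh t) (-x * Real.sinh t) t :=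
      (Real.hasDerivAt_cosh t).const_mul (-x)
    have he : HasDerivAt (fun t : ℝ => Real.exp (-x * Real.cosh t))
        (Real.exp (-x * Real.cosh t) * (-x * Real.sinh t)) t := hc.exp
    have hs1 : HasDerivAt (fun t : ℝ => Real.sinh t) (Real.cosh t) t := Real.hasDerivAt_sinh t
    have hca : HasDerivAt (fun t : ℝ => Real.cosh (α * t)) (Real.sinh (α*t) * α) t := by
      simpa [mul_comm, Function.comp_def] using (Real.hasDerivAt_cosh (α*t)).comp t ((hasDerivAt_id t).const_mul α)
    have hsa : HasDerivAt (fun t : ℝ => Real.sinh (α * t)) (Real.cosh (α*t) * α) t := by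
      simpa [mul_comm, Function.comp_def] using (Real.hasDerivAt_sinh (α*t)).comp t ((hasDerivAt_id t).const_mul α)
    have hA : HasDerivAt (fun t : ℝ => -(x * Real.sinh t * Real.cosh (α*t)) - α * Real.sinh (α*t))
        (-(x * Real.cosh t * Real.cosh (α*t) + x * Real.sinh t * (Real.sinh (α*t) * α))
          - α * (Real.cosh (α*t) * α)) t := by
      exact (((hs1.const_mul x).mul hca).neg).sub (hsa.const_mul α)
    have := he.mul hA
    refine this.congr_deriv (Eq.symm ?_)
    simp only [hW'def]
    linear_combination (-(Real.exp (-x * Real.cosh t) * x^2 * Real.cosh (α*t))) * Real.sinh_sq t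
  have hint : IntegrableOn W' (Set.Ioi (0:ℝ)) := by
    have h0 := integrable_aux α hα0 hα1 0 hx
    have h1 := integrable_aux α hα0 hα1 1 hx
    have h2 := integrable_aux α hα0 hα1 2 hx
    have : W' = fun t => x^2 * (Real.exp (-x * Real.cosh t) * Real.cosh t ^ 2 * Real.cosh (α*t))
        - x * (Real.exp (-x * Real.cosh t) * Real.cosh t ^ 1 * Real.cosh (α*t))
        - (x^2 + α^2) * (Real.exp (-x * Real.cosh t) * Real.cosh t ^ 0 * Real.cosh (α*t)) := by
      funext t; rw [hW'def]; simp only; ring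
    rw [this]
    exact ((h2.const_mul _).sub (h1.const_mul _)).sub (h0.const_mul _)
  have htend : Tendsto W atTop (𝓝 0) := by
    have hB : Tendsto (fun t => (x+1) * (Real.cosh t^2 * Real.exp (-x * Real.cosh t))) atTop (𝓝 0) := by
      have base : Tendsto (fun u : ℝ => u^2 * Real.exp (-x * u)) atTop (𝓝 0) := by
        have h := tendsto_rpow_mul_exp_neg_mul_atTop_nhds_zero 2 x hx
        simp only [show ((2:ℝ)) = ((2:ℕ):ℝ) by norm_num, Real.rpow_natCast] at h
        exact h
      have hcosh_top : Tendsto Real.cosh atTop atTop := by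
        apply tendsto_atTop_mono _ tendsto_id
        intro t
        simp only [id_eq]
        rcases le_or_gt 0 t with h | h
        · exact t_le_cosh h
        · linarith [Real.one_le_cosh t]
      have := (base.comp hcosh_top).const_mul (x+1)
      simpa [Function.comp, mul_zero] using this
    have hBneg : Tendsto (fun t => -((x+1) * (Real.cosh t^2 * Real.exp (-x * Real.cosh t)))) atTop (𝓝 0) := by
      simpa using hB.neg
    have habs : ∀ t : ℝ, 0 ≤ t → |W t| ≤ (x+1) * (Real.cosh t^2 * Real.exp (-x * Real.cosh t)) := by
      intro t ht
      have h1 : |Real.sinh t| ≤ Real.cosh t := by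
        rw [Real.abs_sinh]
        nlinarith [Real.sinh_lt_cosh |t|, Real.cosh_abs t]
      have h2 : Real.cosh (α*t) ≤ Real.cosh t := cosh_mul_le hα0 hα1 ht
      have h3 : |Real.sinh (α*t)| ≤ Real.cosh t := by
        rw [Real.abs_sinh]
        calc Real.sinh |α*t| ≤ Real.cosh |α*t| := le_of_lt (Real.sinh_lt_cosh _)
          _ = Real.cosh (α*t) := Real.cosh_abs _
          _ ≤ Real.cosh t := h2
      have hc1 := Real.one_le_cosh t
      have hca := (Real.cosh_pos (α*t)).le
      have hinner : |(-(x * Real.sinh t * Real.cosh (α*t)) - α * Real.sinh (α*t))|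
          ≤ (x+1) * Real.cosh t^2 := by
        calc |(-(x * Real.sinh t * Real.cosh (α*t)) - α * Real.sinh (α*t))|
            ≤ |(-(x * Real.sinh t * Real.cosh (α*t)))| + |α * Real.sinh (α*t)| := abs_sub _ _
          _ = x * |Real.sinh t| * Real.cosh (α*t) + α * |Real.sinh (α*t)| := by
              rw [abs_neg, abs_mul, abs_mul, abs_mul,
                abs_of_nonneg hx.le, abs_of_nonneg hca, abs_of_nonneg hα0]
          _ ≤ (x+1) * Real.cosh t^2 := by
              have e1 : |Real.sinh t| * Real.cosh (α*t) ≤ Real.cosh t * Real.cosh t :=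
                mul_le_mul h1 h2 hca (le_trans (abs_nonneg _) h1)
              have e2 : α * |Real.sinh (α*t)| ≤ Real.cosh t * Real.cosh t := by
                nlinarith [abs_nonneg (Real.sinh (α*t))]
              nlinarith [mul_le_mul_of_nonneg_left e1 hx.le]
      rw [hWdef]
      simp only
      rw [abs_mul, Real.abs_exp]
      calc Real.exp (-x * Real.cosh t) * |(-(x * Real.sinh t * Real.cosh (α*t)) - α * Real.sinh (α*t))|
          ≤ Real.exp (-x * Real.cosh t) * ((x+1) * Real.cosh t^2) :=
            mul_le_mul_of_nonneg_left hinner (Real.exp_pos _).le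
        _ = (x+1) * (Real.cosh t^2 * Real.exp (-x * Real.cosh t)) := by ring
    apply tendsto_of_tendsto_of_tendsto_of_le_of_le' hBneg hB
    · filter_upwards [eventually_ge_atTop (0:ℝ)] with t ht
      linarith [(abs_le.mp (habs t ht)).1]
    · filter_upwards [eventually_ge_atTop (0:ℝ)] with t ht
      exact (abs_le.mp (habs t ht)).2
  have hW0 : W 0 = 0 := by simp [hWdef]
  have hFTC : ∫ t in Set.Ioi (0:ℝ), W' t = 0 - W 0 :=
    integral_Ioi_of_hasDerivAt_of_tendsto (hW 0).continuousAt.continuousWithinAt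
      (fun t _ => hW t) hint htend
  have h0 := integrable_aux α hα0 hα1 0 hx
  have h1 := integrable_aux α hα0 hα1 1 hx
  have h2 := integrable_aux α hα0 hα1 2 hx
  set f0 : ℝ → ℝ := fun t => Real.exp (-x * Real.cosh t) * Real.cosh t ^ 0 * Real.cosh (α * t) with hf0
  set f1 : ℝ → ℝ := fun t => Real.exp (-x * Real.cosh t) * Real.cosh t ^ 1 * Real.cosh (α * t) with hf1
  set f2 : ℝ → ℝ := fun t => Real.exp (-x * Real.cosh t) * Real.cosh t ^ 2 * Real.cosh (α * t) with hf2
  have hA : IntegrableOn (fun t => x^2 * f2 t - x * f1 t) (Set.Ioi (0:ℝ)) :=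
    (h2.const_mul _).sub (h1.const_mul _)
  have hB : IntegrableOn (fun t => (x^2 + α^2) * f0 t) (Set.Ioi (0:ℝ)) := h0.const_mul _
  have congr1 : ∫ t in Set.Ioi (0:ℝ), W' t
      = ∫ t in Set.Ioi (0:ℝ), ((x^2 * f2 t - x * f1 t) - (x^2 + α^2) * f0 t) := by
    apply setIntegral_congr_fun measurableSet_Ioi
    intro t _
    rw [hW'def, hf0, hf1, hf2]
    simp only
    ring
  have expand : ∫ t in Set.Ioi (0:ℝ), W' t
      = x^2 * Kn α 2 x - x * Kn α 1 x - (x^2 + α^2) * Kn α 0 x := by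
    rw [congr1, integral_sub hA hB, integral_sub (h2.const_mul _) (h1.const_mul _),
      integral_const_mul, integral_const_mul, integral_const_mul]
    rfl
  have : (0:ℝ) - W 0 = 0 := by rw [hW0]; ring
  linarith [expand, hFTC]

lemma hasDerivAt_sqrt_sq {c s : ℝ} (hpos : 0 < s^2 + c) :
    HasDerivAt (fun t : ℝ => Real.sqrt (t^2 + c)) (s / Real.sqrt (s^2 + c)) s := by
  have h1 : HasDerivAt (fun t : ℝ => t^2 + c) (2*s) s := by
    simpa using (hasDerivAt_pow 2 s).add_const c
  have h2 := (Real.hasDerivAt_sqrt hpos.ne').comp s h1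
  refine h2.congr_deriv (Eq.symm ?_)
  have hs : Real.sqrt (s^2+c) ≠ 0 := by positivity
  field_simp

lemma hasDerivAt_Kcomp (α : ℝ) (hα0 : 0 ≤ α) (hα1 : α ≤ 1) (n : ℕ) {lam c s : ℝ}
    (hlam : 0 < lam) (hpos : 0 < s^2 + c) :
    HasDerivAt (fun t : ℝ => Kn α n (lam * Real.sqrt (t^2 + c)))
      (-(Kn α (n+1) (lam * Real.sqrt (s^2+c))) * (lam * (s / Real.sqrt (s^2+c)))) s := by
  have hx : 0 < lam * Real.sqrt (s^2+c) := by positivity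
  have hs := (hasDerivAt_sqrt_sq hpos).const_mul lam
  exact (hasDerivAt_Kn α hα0 hα1 n hx).comp s hs

lemma hasDeriv_G (α : ℝ) (hα0 : 0 ≤ α) (hα1 : α ≤ 1) {lam c s : ℝ}
    (hlam : 0 < lam) (hpos : 0 < s^2 + c) :
    HasDerivAt (fun t : ℝ => lam ^ α * Kn α 0 (lam * Real.sqrt (t^2 + c)))
      (-(lam ^ α * lam * Kn α 1 (lam * Real.sqrt (s^2+c)) * (s / Real.sqrt (s^2+c)))) s := by
  have := (hasDerivAt_Kcomp α hα0 hα1 0 hlam hpos).const_mul (lam ^ α)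
  refine this.congr_deriv (Eq.symm ?_)
  ring

lemma hasDeriv_D1 (α : ℝ) (hα0 : 0 ≤ α) (hα1 : α ≤ 1) {lam c s : ℝ}
    (hlam : 0 < lam) (hpos : 0 < s^2 + c) :
    HasDerivAt (fun t : ℝ => -(lam ^ α * lam * Kn α 1 (lam * Real.sqrt (t^2+c)) * (t / Real.sqrt (t^2+c))))
      (lam ^ α * (lam^2 * Kn α 2 (lam * Real.sqrt (s^2+c)) * (s^2/(s^2+c))
        - lam * Kn α 1 (lam * Real.sqrt (s^2+c)) * (c / ((s^2+c) * Real.sqrt (s^2+c))))) s := by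
  have hR0 : Real.sqrt (s^2+c) ≠ 0 := by positivity
  have hR2 : Real.sqrt (s^2+c) ^ 2 = s^2 + c := Real.sq_sqrt hpos.le
  have hK1 := (hasDerivAt_Kcomp α hα0 hα1 1 hlam hpos).const_mul (lam ^ α * lam)
  have hq : HasDerivAt (fun t : ℝ => t / Real.sqrt (t^2+c))
      ((1 * Real.sqrt (s^2+c) - s * (s / Real.sqrt (s^2+c))) / (Real.sqrt (s^2+c))^2) s :=
    (hasDerivAt_id s).div (hasDerivAt_sqrt_sq hpos) hR0
  have hprod := (hK1.mul hq).neg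
  refine hprod.congr_deriv (Eq.symm ?_)
  have h12 : Kn α (1+1) (lam * Real.sqrt (s^2+c)) = Kn α 2 (lam * Real.sqrt (s^2+c)) := by norm_num
  rw [h12]
  set R := Real.sqrt (s^2+c) with hRdef
  set K1v := Kn α 1 (lam * R)
  set K2v := Kn α 2 (lam * R)
  have hRpos : 0 < R := Real.sqrt_pos.mpr hpos
  rw [show c = R^2 - s^2 by linarith]
  field_simp
  ring

/-- The modified Bessel function of the second kind, via its integral representation. -/
noncomputable def besselK (α x : ℝ) : ℝ :=
  ∫ t in Set.Ioi (0 : ℝ), Real.exp (-x * Real.cosh t) * Real.cosh (α * t)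

/-- The radial function `x ↦ G_λ(|x|)` on `ℝ²`, where `G_λ(r) = λ^α K_α(λ r)`. -/
noncomputable def Grad2 (α lam : ℝ) : ℝ × ℝ → ℝ :=
  fun p => lam ^ α * besselK α (lam * Real.sqrt (p.1 ^ 2 + p.2 ^ 2))

/-- For the radial, real-valued function `G_λ`, the magnetic Schrödinger equation
`((-i∇ + A_α)² + λ²) G_λ = 0` on `ℝ² \ {0}` reduces (using `A_α · ∇G_λ = 0` and
`∇ · A_α = 0`, with `|A_α(x)|² = α²/|x|²`) to `-ΔG_λ + (α²/|x|²) G_λ + λ² G_λ = 0`. -/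
theorem stmt_10 (α lam : ℝ) (hα0 : 0 < α) (hα1 : α < 1) (hlam : 0 < lam) :
    ∀ p : ℝ × ℝ, p ≠ 0 →
      -(deriv (fun s => deriv (fun t => Grad2 α lam (t, p.2)) s) p.1 +
          deriv (fun s => deriv (fun t => Grad2 α lam (p.1, t)) s) p.2) +
        (α ^ 2 / (p.1 ^ 2 + p.2 ^ 2)) * Grad2 α lam p + lam ^ 2 * Grad2 α lam p = 0 := by
  intro p hp
  have hKn0 : ∀ y, besselK α y = Kn α 0 y := by
    intro y
    unfold besselK Kn
    simp only [pow_zero, mul_one]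
  have hGrad : ∀ q : ℝ × ℝ, Grad2 α lam q = lam ^ α * Kn α 0 (lam * Real.sqrt (q.1^2 + q.2^2)) := by
    intro q
    rw [Grad2, hKn0]
  have hq : 0 < p.1^2 + p.2^2 := by
    rcases eq_or_ne p.1 0 with h1 | h1
    · have h2 : p.2 ≠ 0 := by
        intro h2
        exact hp (Prod.ext_iff.mpr ⟨by simpa using h1, by simpa using h2⟩)
      have : 0 < p.2^2 := (sq_nonneg _).lt_of_ne (Ne.symm (pow_ne_zero 2 h2))
      nlinarith [sq_nonneg p.1]
    · have : 0 < p.1^2 := (sq_nonneg _).lt_of_ne (Ne.symm (pow_ne_zero 2 h1))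
      nlinarith [sq_nonneg p.2]
  set R := Real.sqrt (p.1^2 + p.2^2) with hRdef
  have hRpos : 0 < R := Real.sqrt_pos.mpr hq
  have hR2 : R^2 = p.1^2 + p.2^2 := Real.sq_sqrt hq.le
  have hx : 0 < lam * R := by positivity
  -- first partial
  have hev1 : ∀ᶠ s in 𝓝 p.1, 0 < s^2 + p.2^2 := by
    have hcont : Continuous fun s : ℝ => s^2 + p.2^2 := by continuity
    exact hcont.continuousAt.eventually (eventually_gt_nhds hq)
  have e1 : (fun s => deriv (fun t => Grad2 α lam (t, p.2)) s)
      =ᶠ[𝓝 p.1] fun s => -(lam^α * lam * Kn α 1 (lam * Real.sqrt (s^2 + p.2^2)) * (s / Real.sqrt (s^2 + p.2^2))) := by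
    filter_upwards [hev1] with s hs
    have hfun : (fun t => Grad2 α lam (t, p.2)) = fun t => lam^α * Kn α 0 (lam * Real.sqrt (t^2 + p.2^2)) := by
      funext t
      exact hGrad (t, p.2)
    rw [hfun]
    exact (hasDeriv_G α hα0.le hα1.le hlam hs).deriv
  have d1 : deriv (fun s => deriv (fun t => Grad2 α lam (t, p.2)) s) p.1
      = lam^α * (lam^2 * Kn α 2 (lam * R) * (p.1^2/(p.1^2+p.2^2))
        - lam * Kn α 1 (lam * R) * (p.2^2 / ((p.1^2+p.2^2) * R))) := by
    rw [e1.deriv_eq]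
    exact (hasDeriv_D1 α hα0.le hα1.le hlam (c := p.2^2) (s := p.1) hq).deriv
  -- second partial
  have hq' : 0 < p.2^2 + p.1^2 := by linarith
  have hev2 : ∀ᶠ s in 𝓝 p.2, 0 < s^2 + p.1^2 := by
    have hcont : Continuous fun s : ℝ => s^2 + p.1^2 := by continuity
    exact hcont.continuousAt.eventually (eventually_gt_nhds hq')
  have hRcomm : Real.sqrt (p.2^2 + p.1^2) = R := by rw [hRdef, add_comm]
  have e2 : (fun s => deriv (fun t => Grad2 α lam (p.1, t)) s)
      =ᶠ[𝓝 p.2] fun s => -(lam^α * lam * Kn α 1 (lam * Real.sqrt (s^2 + p.1^2)) * (s / Real.sqrt (s^2 + p.1^2))) := by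
    filter_upwards [hev2] with s hs
    have hfun : (fun t => Grad2 α lam (p.1, t)) = fun t => lam^α * Kn α 0 (lam * Real.sqrt (t^2 + p.1^2)) := by
      funext t
      rw [hGrad (p.1, t)]
      norm_num [add_comm]
    rw [hfun]
    exact (hasDeriv_G α hα0.le hα1.le hlam hs).deriv
  have d2 : deriv (fun s => deriv (fun t => Grad2 α lam (p.1, t)) s) p.2
      = lam^α * (lam^2 * Kn α 2 (lam * R) * (p.2^2/(p.2^2+p.1^2))
        - lam * Kn α 1 (lam * R) * (p.1^2 / ((p.2^2+p.1^2) * R))) := by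
    rw [e2.deriv_eq]
    have := (hasDeriv_D1 α hα0.le hα1.le hlam (c := p.1^2) (s := p.2) hq').deriv
    rwa [hRcomm] at this
  have ode := bessel_ode α hα0.le hα1.le hx
  rw [d1, d2, hGrad p]
  set K0 := Kn α 0 (lam * R)
  set K1 := Kn α 1 (lam * R)
  set K2 := Kn α 2 (lam * R)
  have hq0 : (p.1^2 + p.2^2) ≠ 0 := hq.ne'
  have hq0' : (p.2^2 + p.1^2) ≠ 0 := hq'.ne'
  rw [show p.2^2 = R^2 - p.1^2 by linarith]
  field_simp
  linear_combination (-(lam ^ α) * R^3) * ode
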